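/- Let p be a prime, and let K be a complete discretely valued field of characteristic p with normalized valuation v and perfect residue field. Let u, A, c ∈ K with v(u) = 0, v(A) = p − 1, and v(c) = ι where 1 ≤ ι ≤ p − 1, and let z be a root of u·Z^p + A·Z − c in an algebraic closure of K. Then the degree-p totally ramified extension K(z)/K has a unique ramification break, equal to p − ι; equivalently, the different ideal of the extension of valuation rings O_{K(z)}/O_K has valuation exponent (p − 1)(p − ι + 1). -/

import Mathlib

set_option maxHeartbeats 1000000
set_option synthInstance.maxHeartbeats 200000



section ValAux

variable {F : Type*} [Field F] (w : F → WithTop ℚ)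
  (hw0 : ∀ a, w a = ⊤ ↔ a = 0)
  (hwmul : ∀ a b, w (a * b) = w a + w b)
  (hwadd : ∀ a b, min (w a) (w b) ≤ w (a + b))

include hw0 in
lemma waux_zero : w 0 = ⊤ := (hw0 0).2 rfl

include hw0 hwmul in
lemma waux_one : w 1 = 0 := by
  have h1 : (1 : F) ≠ 0 := one_ne_zero
  have ht : w 1 ≠ ⊤ := fun h => h1 ((hw0 1).1 h)
  have := hwmul 1 1
  rw [one_mul] at this
  lift w 1 to ℚ using ht with q hq
  rw [← WithTop.coe_add] at this
  have : q = q + q := WithTop.coe_injective this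
  have : q = 0 := by linarith
  simp [this]

include hw0 hwmul in
lemma waux_neg (a : F) : w (-a) = w a := by
  have hm1 : w (-1 : F) = 0 := by
    have h1 : (-1 : F) ≠ 0 := neg_ne_zero.2 one_ne_zero
    have ht : w (-1 : F) ≠ ⊤ := fun h => h1 ((hw0 _).1 h)
    have := hwmul (-1) (-1)
    rw [neg_mul_neg, one_mul, waux_one w hw0 hwmul] at this
    lift w (-1 : F) to ℚ using ht with q hq
    rw [← WithTop.coe_add] at this
    have : (0 : ℚ) = q + q := WithTop.coe_injective this
    have : q = 0 := by linarith
    simp [this]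
  calc w (-a) = w ((-1) * a) := by rw [neg_one_mul]
  _ = w (-1) + w a := hwmul _ _
  _ = w a := by rw [hm1, zero_add]

include hw0 hwmul in
lemma waux_pow (a : F) (q : ℚ) (h : w a = (q : WithTop ℚ)) (n : ℕ) :
    w (a ^ n) = (((n : ℚ) * q : ℚ) : WithTop ℚ) := by
  induction n with
  | zero => simpa using waux_one w hw0 hwmul
  | succ m ih =>
      rw [pow_succ, hwmul, ih, h, ← WithTop.coe_add]
      congr 1
      push_cast
      ring

include hwadd hw0 in
lemma waux_sum_ge {ι : Type*} (s : Finset ι) (f : ι → F) (b : WithTop ℚ)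
    (h : ∀ i ∈ s, b ≤ w (f i)) : b ≤ w (∑ i ∈ s, f i) := by
  classical
  induction s using Finset.induction with
  | empty => simp [waux_zero w hw0]
  | @insert a s' hx ih =>
      rw [Finset.sum_insert hx]
      refine le_trans (le_min (h a (Finset.mem_insert_self _ _)) ?_) (hwadd _ _)
      exact ih fun i hi => h i (Finset.mem_insert_of_mem hi)

include hwadd hw0 in
lemma waux_sum_gt {ι : Type*} (s : Finset ι) (f : ι → F) (b : WithTop ℚ) (hb : b ≠ ⊤)
    (h : ∀ i ∈ s, b < w (f i)) : b < w (∑ i ∈ s, f i) := by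
  classical
  induction s using Finset.induction with
  | empty => simpa [waux_zero w hw0] using lt_top_iff_ne_top.2 hb
  | @insert a s' hx ih =>
      rw [Finset.sum_insert hx]
      refine lt_of_lt_of_le (lt_min (h a (Finset.mem_insert_self _ _)) ?_) (hwadd _ _)
      exact ih fun i hi => h i (Finset.mem_insert_of_mem hi)

include hw0 hwmul hwadd in
lemma waux_add_eq (a b : F) (h : w a < w b) : w (a + b) = w a := by
  refine le_antisymm ?_ ?_
  · by_contra hcon
    push_neg at hcon
    have h2 : w a < w (-b) := by rwa [waux_neg w hw0 hwmul]
    have := hwadd (a + b) (-b)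
    rw [add_neg_cancel_right] at this
    exact absurd (lt_of_lt_of_le (lt_min hcon h2) this) (lt_irrefl _)
  · exact le_trans (le_min le_rfl (le_of_lt h)) (hwadd a b)

include hw0 hwmul hwadd in
lemma waux_sum_eq {ι : Type*} (s : Finset ι) (f : ι → F) (j₀ : ι) (hj₀ : j₀ ∈ s)
    (h : ∀ i ∈ s, i ≠ j₀ → w (f j₀) < w (f i)) :
    w (∑ i ∈ s, f i) = w (f j₀) := by
  classical
  rw [← Finset.add_sum_erase s f hj₀]
  by_cases htop : w (f j₀) = ⊤
  · have he : ∀ i ∈ s.erase j₀, (False : Prop) := by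
      intro i hi
      have := h i (Finset.mem_of_mem_erase hi) (Finset.ne_of_mem_erase hi)
      rw [htop] at this
      exact absurd this (by simp)
    have : s.erase j₀ = ∅ := Finset.eq_empty_of_forall_notMem (fun i hi => he i hi)
    simp [this]
  · refine waux_add_eq w hw0 hwmul hwadd _ _ ?_
    refine waux_sum_gt w hw0 hwadd _ _ _ htop ?_
    intro i hi
    exact h i (Finset.mem_of_mem_erase hi) (Finset.ne_of_mem_erase hi)

include hw0 hwmul in
lemma waux_prod_multiset (m : Multiset F) (C : ℚ)
    (h : ∀ x ∈ m, w x = (C : WithTop ℚ)) :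
    w m.prod = (((m.card : ℚ) * C : ℚ) : WithTop ℚ) := by
  induction m using Multiset.induction with
  | empty => simpa using waux_one w hw0 hwmul
  | cons a m ih =>
      rw [Multiset.prod_cons, hwmul, h a (Multiset.mem_cons_self _ _),
        ih fun x hx => h x (Multiset.mem_cons_of_mem hx), ← WithTop.coe_add]
      congr 1
      simp [Multiset.card_cons]
      push_cast
      ring

end ValAux

section Combo

lemma combo_int {p : ℕ} (hp : p.Prime) {ε : ℤ} (hpε : ¬ (p : ℤ) ∣ ε)
    {i j : ℕ} (hi : i < p) (hj : j < p) {n m : ℤ}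
    (h : n * p + i * ε = m * p + j * ε) : i = j := by
  have hd : (p : ℤ) ∣ ((i : ℤ) - j) * ε := ⟨m - n, by ring_nf; linarith⟩
  have hpp : Prime (p : ℤ) := Nat.prime_iff_prime_int.mp hp
  rcases hpp.dvd_mul.mp hd with h1 | h1
  · have : ((i : ℤ) - j) = 0 := by
      refine Int.eq_zero_of_abs_lt_dvd h1 ?_
      rw [abs_sub_lt_iff]
      constructor <;> [skip; skip] <;> push_cast <;> omega
    omega
  · exact absurd h1 hpε

variable {K : Type*} [Field K] {L : Type*} [Field L] [Algebra K L]
  (w : L → WithTop ℚ)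
  (hw0 : ∀ a, w a = ⊤ ↔ a = 0)
  (hwmul : ∀ a b, w (a * b) = w a + w b)
  (hwadd : ∀ a b, min (w a) (w b) ≤ w (a + b))
  (v : K → WithTop ℚ)
  (hv0 : ∀ a, v a = ⊤ ↔ a = 0)
  (hvint : ∀ a : K, a ≠ 0 → ∃ n : ℤ, v a = ((n : ℚ) : WithTop ℚ))
  (hwv : ∀ a : K, w (algebraMap K L a) = v a)
  {p : ℕ} (hp : p.Prime)
  {x : L} {ε : ℤ} (hx : w x = ((((ε : ℚ) / (p : ℚ)) : ℚ) : WithTop ℚ))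
  (hpε : ¬ (p : ℤ) ∣ ε)

include hw0 hwmul hvint hwv hx in
lemma waux_term (a : K) (j : ℕ) (ha : a ≠ 0) :
    ∃ n : ℤ, v a = ((n : ℚ) : WithTop ℚ) ∧
      w (algebraMap K L a * x ^ j) =
        ((((n : ℚ) + (j : ℚ) * ((ε : ℚ) / (p : ℚ))) : ℚ) : WithTop ℚ) := by
  obtain ⟨n, hn⟩ := hvint a ha
  refine ⟨n, hn, ?_⟩
  rw [hwmul, hwv, hn, waux_pow w hw0 hwmul x _ hx j, ← WithTop.coe_add]

include hw0 hwmul hwadd hvint hwv hp hx hpε in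
lemma waux_combo (a : ℕ → K) (hne : ∃ j, j < p ∧ a j ≠ 0) :
    ∃ j₀, j₀ < p ∧ a j₀ ≠ 0 ∧
      w (∑ j ∈ Finset.range p, algebraMap K L (a j) * x ^ j) =
        w (algebraMap K L (a j₀) * x ^ j₀) ∧
      (∀ j, j < p → j ≠ j₀ → a j ≠ 0 →
        w (algebraMap K L (a j₀) * x ^ j₀) < w (algebraMap K L (a j) * x ^ j)) := by
  classical
  set s : Finset ℕ := (Finset.range p).filter (fun j => a j ≠ 0) with hs
  have hsne : s.Nonempty := by
    obtain ⟨j, hj, haj⟩ := hne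
    exact ⟨j, by simp [hs, hj, haj]⟩
  have hdist : ∀ i ∈ s, ∀ j ∈ s, i ≠ j →
      w (algebraMap K L (a i) * x ^ i) ≠ w (algebraMap K L (a j) * x ^ j) := by
    intro i hi j hj hij
    simp only [hs, Finset.mem_filter, Finset.mem_range] at hi hj
    obtain ⟨n, _, hn2⟩ := waux_term w hw0 hwmul v hvint hwv hx (a i) i hi.2
    obtain ⟨m, _, hm2⟩ := waux_term w hw0 hwmul v hvint hwv hx (a j) j hj.2
    rw [hn2, hm2]
    intro hEq
    have hq : (n : ℚ) + (i : ℚ) * ((ε : ℚ) / (p : ℚ))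
        = (m : ℚ) + (j : ℚ) * ((ε : ℚ) / (p : ℚ)) := WithTop.coe_injective hEq
    have hp0 : (p : ℚ) ≠ 0 := Nat.cast_ne_zero.mpr hp.pos.ne'
    have hZ : (n : ℚ) * p + (i : ℚ) * ε = (m : ℚ) * p + (j : ℚ) * ε := by
      field_simp at hq
      linarith
    have hZ' : ((n * p + i * ε : ℤ) : ℚ) = ((m * p + j * ε : ℤ) : ℚ) := by
      push_cast
      linarith
    exact hij (combo_int hp hpε hi.1 hj.1 (Int.cast_injective hZ'))
  obtain ⟨j₀, hj₀s, hmin⟩ :=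
    Finset.exists_min_image s (fun j => w (algebraMap K L (a j) * x ^ j)) hsne
  have hj₀ : j₀ < p ∧ a j₀ ≠ 0 := by simpa [hs] using hj₀s
  have hstrict : ∀ i ∈ s, i ≠ j₀ →
      w (algebraMap K L (a j₀) * x ^ j₀) < w (algebraMap K L (a i) * x ^ i) :=
    fun i hi hij => lt_of_le_of_ne (hmin i hi) (hdist j₀ hj₀s i hi (Ne.symm hij))
  have hsum : (∑ j ∈ Finset.range p, algebraMap K L (a j) * x ^ j)
      = ∑ j ∈ s, algebraMap K L (a j) * x ^ j := by
    refine (Finset.sum_subset (Finset.filter_subset _ _) ?_).symm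
    intro j hj hjs
    have : a j = 0 := by
      by_contra hcon
      exact hjs (by simp [hs, Finset.mem_range.mp hj, hcon])
    simp [this]
  refine ⟨j₀, hj₀.1, hj₀.2, ?_, ?_⟩
  · rw [hsum]
    exact waux_sum_eq w hw0 hwmul hwadd s _ j₀ hj₀s hstrict
  · intro j hjp hjne haj
    exact hstrict j (by simp [hs, hjp, haj]) hjne

include hw0 hwmul hwadd hvint hwv hp hx hpε in
lemma waux_combo_ne (a : ℕ → K) (hne : ∃ j, j < p ∧ a j ≠ 0) :
    (∑ j ∈ Finset.range p, algebraMap K L (a j) * x ^ j) ≠ 0 := by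
  obtain ⟨j₀, hj₀p, hj₀, hsum, -⟩ :=
    waux_combo w hw0 hwmul hwadd v hvint hwv hp hx hpε a hne
  intro hcon
  rw [hcon, waux_zero w hw0] at hsum
  have : algebraMap K L (a j₀) * x ^ j₀ = 0 := (hw0 _).1 hsum.symm
  rcases mul_eq_zero.mp this with h | h
  · exact hj₀ ((_root_.map_eq_zero (algebraMap K L)).mp h)
  · have hx0 : x = 0 := (pow_eq_zero_iff'.mp h).1
    rw [hx0, waux_zero w hw0] at hx
    exact WithTop.coe_ne_top hx.symm

end Combo

section NatCast

variable {L : Type*} [Field L] (w : L → WithTop ℚ)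
  (hw0 : ∀ a, w a = ⊤ ↔ a = 0)
  (hwmul : ∀ a b, w (a * b) = w a + w b)
  (p : ℕ) [hfp : Fact p.Prime] [CharP L p]

include hw0 hwmul in
lemma waux_natcast (m : ℕ) (hm : ¬ p ∣ m) : w ((m : L)) = 0 := by
  have hx : (m : ZMod p) ≠ 0 := fun h => hm ((ZMod.natCast_eq_zero_iff m p).1 h)
  set f := ZMod.castHom (dvd_refl p) L with hf
  have hmL : (m : L) = f (m : ZMod p) := by rw [map_natCast]
  have hpow : (m : L) ^ (p - 1) = 1 := by
    rw [hmL, ← map_pow, ZMod.pow_card_sub_one_eq_one hx, map_one]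
  have hne : (m : L) ≠ 0 := by
    rw [hmL]
    exact fun h => hx (f.injective (by rw [h, map_zero]))
  have htop : w ((m : L)) ≠ ⊤ := fun h => hne ((hw0 _).1 h)
  lift w ((m : L)) to ℚ using htop with q hq
  have := waux_pow w hw0 hwmul ((m : L)) q hq.symm (p - 1)
  rw [hpow, waux_one w hw0 hwmul] at this
  have h0 : ((p - 1 : ℕ) : ℚ) * q = 0 := by
    have := WithTop.coe_injective this.symm
    linarith [this]
  have hp1 : ((p - 1 : ℕ) : ℚ) ≠ 0 := by
    have := hfp.out.two_le
    have : p - 1 ≠ 0 := by omega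
    exact_mod_cast Nat.cast_ne_zero.mpr this
  have : q = 0 := by
    rcases mul_eq_zero.mp h0 with h | h
    · exact absurd h hp1
    · exact h
  simp [this]

include hw0 hwmul p in
lemma waux_natcast_nonneg (m : ℕ) : (0 : WithTop ℚ) ≤ w ((m : L)) := by
  by_cases h : p ∣ m
  · rw [(CharP.cast_eq_zero_iff L p m).2 h, waux_zero w hw0]
    exact le_top
  · rw [waux_natcast w hw0 hwmul p m h]

end NatCast

section DiffPow

variable {L : Type*} [Field L] (w : L → WithTop ℚ)
  (hw0 : ∀ a, w a = ⊤ ↔ a = 0)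
  (hwmul : ∀ a b, w (a * b) = w a + w b)
  (hwadd : ∀ a b, min (w a) (w b) ≤ w (a + b))
  (p : ℕ) [hfp : Fact p.Prime] [CharP L p]
  (ι : ℤ) (hι1 : 1 ≤ ι) (hι2 : ι ≤ (p : ℤ) - 1)
  (z δ : L) (hwz : w z = ((((ι : ℚ)) / (p : ℚ) : ℚ) : WithTop ℚ))
  (hwδ : w δ = ((1 : ℚ) : WithTop ℚ))

include hw0 hwmul hwadd hι1 hι2 hwz hwδ in
lemma waux_diff_pow (j : ℕ) (hj1 : 1 ≤ j) (hjp : j < p) :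
    w ((z + δ) ^ j - z ^ j) =
      (((1 : ℚ) + ((j : ℚ) - 1) * ((ι : ℚ) / (p : ℚ)) : ℚ) : WithTop ℚ) := by
  classical
  have hp0 : (0 : ℚ) < (p : ℚ) := by exact_mod_cast hfp.out.pos
  have hιp : (ι : ℚ) / (p : ℚ) < 1 := by
    rw [div_lt_one hp0]
    have : (ι : ℚ) ≤ (p : ℚ) - 1 := by exact_mod_cast hι2
    linarith
  set F : ℕ → L := fun k => δ ^ k * z ^ (j - k) * ((j.choose k : ℕ) : L) with hF
  have hsum : (z + δ) ^ j - z ^ j = ∑ k ∈ (Finset.range (j + 1)).erase 0, F k := by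
    have hpow : (z + δ) ^ j = ∑ k ∈ Finset.range (j + 1), F k := by
      rw [add_comm z δ, add_pow]
    have h0 : F 0 = z ^ j := by simp [hF]
    rw [hpow, ← Finset.add_sum_erase _ F (Finset.mem_range.2 (Nat.succ_pos j)), h0]
    ring
  have hbase : ∀ k, 1 ≤ k → k ≤ j →
      w (F k) = (((k : ℚ) + ((j : ℚ) - k) * ((ι : ℚ) / (p : ℚ)) : ℚ) : WithTop ℚ)
        + w (((j.choose k : ℕ) : L)) := by
    intro k hk1 hkj
    rw [hF]
    simp only
    rw [hwmul, hwmul, waux_pow w hw0 hwmul δ _ hwδ k, waux_pow w hw0 hwmul z _ hwz (j - k),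
      ← WithTop.coe_add]
    congr 2
    have : ((j - k : ℕ) : ℚ) = (j : ℚ) - (k : ℚ) := by
      have : k ≤ j := hkj
      push_cast [this]
      ring
    rw [this]
    ring
  have hmem1 : 1 ∈ (Finset.range (j + 1)).erase 0 :=
    Finset.mem_erase.2 ⟨one_ne_zero, Finset.mem_range.2 (by omega)⟩
  have hF1 : w (F 1) = (((1 : ℚ) + ((j : ℚ) - 1) * ((ι : ℚ) / (p : ℚ)) : ℚ) : WithTop ℚ) := by
    rw [hbase 1 le_rfl hj1, Nat.choose_one_right,
      waux_natcast w hw0 hwmul p j (Nat.not_dvd_of_pos_of_lt hj1 hjp), add_zero]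
    norm_num
  rw [hsum, waux_sum_eq w hw0 hwmul hwadd _ F 1 hmem1 ?_, hF1]
  intro k hk hk1
  have hkr : k ≤ j ∧ k ≠ 0 := by
    simp [Finset.mem_erase, Finset.mem_range] at hk
    omega
  have hk2 : 2 ≤ k := by omega
  have hQ : (1 : ℚ) + ((j : ℚ) - 1) * ((ι : ℚ) / (p : ℚ))
      < (k : ℚ) + ((j : ℚ) - k) * ((ι : ℚ) / (p : ℚ)) := by
    have hkQ : (2 : ℚ) ≤ (k : ℚ) := by exact_mod_cast hk2
    have hι0 : (0 : ℚ) ≤ (ι : ℚ) / (p : ℚ) := by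
      apply div_nonneg _ (le_of_lt hp0)
      exact_mod_cast (le_trans zero_le_one hι1)
    nlinarith [mul_pos (by linarith : (0:ℚ) < (k : ℚ) - 1) (by linarith : (0:ℚ) < 1 - (ι : ℚ) / (p : ℚ))]
  calc w (F 1) = (((1 : ℚ) + ((j : ℚ) - 1) * ((ι : ℚ) / (p : ℚ)) : ℚ) : WithTop ℚ) := hF1
  _ < (((k : ℚ) + ((j : ℚ) - k) * ((ι : ℚ) / (p : ℚ)) : ℚ) : WithTop ℚ) := WithTop.coe_lt_coe.2 hQ
  _ ≤ _ := by
      rw [hbase k (by omega) hkr.1]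
      exact le_add_of_nonneg_right (waux_natcast_nonneg w hw0 hwmul p _)

end DiffPow



/-- Let `p` be a prime, and let `K` be a complete discretely valued field of
characteristic `p` with normalized valuation `v` and perfect residue field.  Let
`u, A, c ∈ K` with `v(u) = 0`, `v(A) = p − 1`, and `v(c) = ι` where `1 ≤ ι ≤ p − 1`, and let
`z` be a root of `u·Z^p + A·Z − c` in an algebraic closure of `K`.  Then the degree-`p`
totally ramified extension `K(z)/K` has a unique ramification break, equal to `p − ι`;
equivalently, the different ideal of the extension of valuation rings `O_{K(z)}/O_K` has
valuation exponent `(p − 1)(p − ι + 1)`.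

The conclusion is formalized through the "equivalently" clause: `[K(z) : K] = p`,
uniformizers `π` of `K(z)` exist (elements of `w`-value `1/p`; for such a `π` one has the
monogenic presentation `O_{K(z)} = O_K[π]`), and for every uniformizer `π` of `K(z)` the
generator `g'(π)` of the different ideal (`g` the minimal polynomial of `π` over `K`) has
normalized valuation exponent `p·w(g'(π)) = (p − 1)(p − ι + 1)`.  The valuations are encoded
by their axioms, completeness by the convergence of Cauchy sequences, and perfectness of the
residue field by surjectivity of the Frobenius modulo the maximal ideal. -/
theorem stmt_13 (p : ℕ) (hp : p.Prime) (K : Type*) [Field K] [CharP K p]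
    (v : K → WithTop ℚ)
    (hv0 : ∀ a, v a = ⊤ ↔ a = 0)
    (hvmul : ∀ a b, v (a * b) = v a + v b)
    (hvadd : ∀ a b, min (v a) (v b) ≤ v (a + b))
    -- `v` is a normalized discrete valuation: its values on `K^×` are exactly `ℤ`
    (hvint : ∀ a : K, a ≠ 0 → ∃ n : ℤ, v a = ((n : ℚ) : WithTop ℚ))
    (hvsurj : ∀ n : ℤ, ∃ a : K, v a = ((n : ℚ) : WithTop ℚ))
    -- `K` is complete: every Cauchy sequence converges
    (hcomplete : ∀ f : ℕ → K,
      (∀ m : ℤ, ∃ N : ℕ, ∀ i ≥ N, ∀ j ≥ N, ((m : ℚ) : WithTop ℚ) ≤ v (f i - f j)) →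
      ∃ L : K, ∀ m : ℤ, ∃ N : ℕ, ∀ i ≥ N, ((m : ℚ) : WithTop ℚ) ≤ v (f i - L))
    -- the residue field of `v` is perfect (char `p`): Frobenius is surjective mod the
    -- maximal ideal
    (hperf : ∀ a : K, 0 ≤ v a → ∃ b : K, 0 ≤ v b ∧ 0 < v (b ^ p - a))
    -- an algebraic closure `L` of `K`
    (L : Type*) [Field L] [Algebra K L] [IsAlgClosure K L]
    -- `w` is an extension of `v` to `L`
    (w : L → WithTop ℚ)
    (hw0 : ∀ a, w a = ⊤ ↔ a = 0)
    (hwmul : ∀ a b, w (a * b) = w a + w b)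
    (hwadd : ∀ a b, min (w a) (w b) ≤ w (a + b))
    (hwv : ∀ a : K, w (algebraMap K L a) = v a)
    (u A c : K) (ι : ℤ) (hι1 : 1 ≤ ι) (hι2 : ι ≤ (p : ℤ) - 1)
    (hu : v u = ((0 : ℚ) : WithTop ℚ)) (hA : v A = (((p : ℚ) - 1 : ℚ) : WithTop ℚ))
    (hc : v c = ((ι : ℚ) : WithTop ℚ))
    (z : L) (hz : algebraMap K L u * z ^ p + algebraMap K L A * z - algebraMap K L c = 0) :
    Module.finrank K (IntermediateField.adjoin K {z}) = p ∧
    (∃ π : L, π ∈ IntermediateField.adjoin K {z} ∧ w π = (((1 : ℚ) / (p : ℚ)) : WithTop ℚ)) ∧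
    (∀ π : L, π ∈ IntermediateField.adjoin K {z} → w π = (((1 : ℚ) / (p : ℚ)) : WithTop ℚ) →
      w (Polynomial.aeval π (Polynomial.derivative (minpoly K π)))
        = (((((p : ℚ) - 1) * ((p : ℚ) - (ι : ℚ) + 1)) / (p : ℚ)) : WithTop ℚ)) := by
  classical
  haveI hfp : Fact p.Prime := ⟨hp⟩
  have hφ : Function.Injective (algebraMap K L) := (algebraMap K L).injective
  haveI hchL : CharP L p := charP_of_injective_algebraMap hφ p
  have hp0 : (0 : ℚ) < (p : ℚ) := by exact_mod_cast hp.pos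
  have hpQ : (p : ℚ) ≠ 0 := ne_of_gt hp0
  have hp2 : 2 ≤ p := hp.two_le
  have hι1Q : (1 : ℚ) ≤ (ι : ℚ) := by exact_mod_cast hι1
  have hι2Q : (ι : ℚ) ≤ (p : ℚ) - 1 := by
    have : ((ι : ℚ)) ≤ (((p : ℤ) - 1 : ℤ) : ℚ) := by exact_mod_cast hι2
    push_cast at this
    linarith
  have hιp : ¬ (p : ℤ) ∣ ι := by
    intro hdvd
    rcases Int.le_of_dvd (by omega) hdvd with h
    omega
  have hnz : ∀ (a : K) (q : ℚ), v a = (q : WithTop ℚ) → a ≠ 0 := by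
    intro a q hq h
    rw [h, (hv0 0).2 rfl] at hq
    exact WithTop.top_ne_coe hq
  have hu0 : u ≠ 0 := hnz u _ hu
  have hA0 : A ≠ 0 := hnz A _ hA
  have hc0 : c ≠ 0 := hnz c _ hc
  have hz0 : z ≠ 0 := by
    intro h
    rw [h] at hz
    simp only [zero_pow hp.pos.ne', mul_zero, add_zero, zero_sub, neg_eq_zero,
      zero_add] at hz
    exact hc0 (hφ (by rw [hz, map_zero]))
  have hzeq : algebraMap K L u * z ^ p + algebraMap K L A * z = algebraMap K L c :=
    sub_eq_zero.mp hz
  -- the valuation of z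
  have hwz : w z = ((((ι : ℚ) / (p : ℚ)) : ℚ) : WithTop ℚ) := by
    have hwztop : w z ≠ ⊤ := fun h => hz0 ((hw0 z).1 h)
    obtain ⟨q, hq⟩ : ∃ q : ℚ, w z = (q : WithTop ℚ) := by
      cases hwz' : w z with
      | top => exact absurd hwz' hwztop
      | coe q => exact ⟨q, rfl⟩
    have h1 : w (algebraMap K L u * z ^ p) = (((p : ℚ) * q : ℚ) : WithTop ℚ) := by
      rw [hwmul, hwv, hu, waux_pow w hw0 hwmul z q hq p, ← WithTop.coe_add]
      norm_num
    have h2 : w (algebraMap K L A * z) = ((((p : ℚ) - 1) + q : ℚ) : WithTop ℚ) := by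
      rw [hwmul, hwv, hA, hq, ← WithTop.coe_add]
    have h3 : w (algebraMap K L c) = ((ι : ℚ) : WithTop ℚ) := by rw [hwv, hc]
    rcases lt_trichotomy ((p : ℚ) * q) (((p : ℚ) - 1) + q) with hlt | heq | hgt
    · have heval := waux_add_eq w hw0 hwmul hwadd (algebraMap K L u * z ^ p)
        (algebraMap K L A * z) (by rw [h1, h2]; exact WithTop.coe_lt_coe.2 hlt)
      rw [hzeq, h3, h1] at heval
      have hval : (ι : ℚ) = (p : ℚ) * q := WithTop.coe_injective heval
      rw [hq]
      congr 1
      field_simp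
      linarith
    · have hq1 : q = 1 := by nlinarith
      have hminle : min (w (algebraMap K L u * z ^ p)) (w (algebraMap K L A * z))
          ≤ w (algebraMap K L c) := by rw [← hzeq]; exact hwadd _ _
      rw [h1, h2, h3, ← WithTop.coe_min] at hminle
      have : min ((p : ℚ) * q) (((p : ℚ) - 1) + q) ≤ (ι : ℚ) := WithTop.coe_le_coe.1 hminle
      rw [hq1] at this heq
      rw [min_eq_left (le_of_eq heq)] at this
      linarith
    · have heval := waux_add_eq w hw0 hwmul hwadd (algebraMap K L A * z)
        (algebraMap K L u * z ^ p) (by rw [h1, h2]; exact WithTop.coe_lt_coe.2 hgt)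
      rw [add_comm, hzeq, h3, h2] at heval
      have hiq : (ι : ℚ) = ((p : ℚ) - 1) + q := WithTop.coe_injective heval
      have hq1 : 1 < q := by nlinarith
      linarith
  -- auxiliary monic polynomial with root z
  set fhat : Polynomial K := Polynomial.X ^ p +
      (Polynomial.C (A / u) * Polynomial.X + Polynomial.C (-(c / u))) with hfhat
  have hlin_lt : (Polynomial.C (A / u) * Polynomial.X + Polynomial.C (-(c / u))).degree
      < (p : WithBot ℕ) := lt_of_le_of_lt Polynomial.degree_linear_le
        (by exact_mod_cast Nat.one_lt_cast.mpr (by omega) : (1 : WithBot ℕ) < (p : WithBot ℕ))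
  have hfhatmonic : fhat.Monic := Polynomial.monic_X_pow_add hlin_lt
  have hfhatdeg : fhat.degree = p := by
    rw [hfhat, Polynomial.degree_add_eq_left_of_degree_lt
      (by rwa [Polynomial.degree_X_pow]), Polynomial.degree_X_pow]
  have hfhatnd : fhat.natDegree = p := Polynomial.natDegree_eq_of_degree_eq_some hfhatdeg
  have huL : algebraMap K L u ≠ 0 := fun h => hu0 (hφ (by rw [h, map_zero]))
  have hfz : Polynomial.aeval z fhat = 0 := by
    have key : algebraMap K L u * Polynomial.aeval z fhat = 0 := by
      rw [← hz, hfhat]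
      simp only [map_add, map_mul, map_pow, Polynomial.aeval_X, Polynomial.aeval_C, map_neg,
        map_div₀]
      field_simp
      ring
    rcases mul_eq_zero.mp key with h | h
    · exact absurd h huL
    · exact h
  have hintz : IsIntegral K z := ⟨fhat, hfhatmonic, hfz⟩
  have hdegz_le : (minpoly K z).natDegree ≤ p := by
    rw [← hfhatnd]
    exact Polynomial.natDegree_le_of_dvd (minpoly.dvd K z hfz) hfhatmonic.ne_zero
  have hdeg_ge : ∀ (x : L) (ε : ℤ), w x = ((((ε : ℚ)) / (p : ℚ) : ℚ) : WithTop ℚ) →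
      ¬ (p : ℤ) ∣ ε → IsIntegral K x → p ≤ (minpoly K x).natDegree := by
    intro x ε hx hpε hint
    by_contra hlt
    push_neg at hlt
    have hmonic := minpoly.monic hint
    have haev : Polynomial.aeval x (minpoly K x) = 0 := minpoly.aeval K x
    have hexp : Polynomial.aeval x (minpoly K x)
        = ∑ j ∈ Finset.range p, algebraMap K L ((minpoly K x).coeff j) * x ^ j := by
      rw [Polynomial.aeval_eq_sum_range' hlt]
      exact Finset.sum_congr rfl fun j _ => by rw [Algebra.smul_def]
    have hcoeff : ∃ j, j < p ∧ (minpoly K x).coeff j ≠ 0 :=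
      ⟨(minpoly K x).natDegree, hlt, by simp [hmonic.coeff_natDegree]⟩
    rw [hexp] at haev
    exact waux_combo_ne w hw0 hwmul hwadd v hvint hwv hp hx hpε _ hcoeff haev
  have hdegz : (minpoly K z).natDegree = p := le_antisymm hdegz_le (hdeg_ge z ι hwz hιp hintz)
  have hfinrank : Module.finrank K (IntermediateField.adjoin K {z}) = p := by
    rw [IntermediateField.adjoin.finrank hintz, hdegz]
  -- Part 2 : existence of a uniformizer
  have hpart2 : ∃ π : L, π ∈ IntermediateField.adjoin K {z} ∧
      w π = (((1 : ℚ) / (p : ℚ)) : WithTop ℚ) := by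
    have hιz : ((ι : ZMod p)) ≠ 0 := fun h => hιp ((ZMod.intCast_zmod_eq_zero_iff_dvd ι p).1 h)
    set a : ℕ := ((ι : ZMod p)⁻¹).val with ha
    have hcast : (((a : ℤ) * ι - 1 : ℤ) : ZMod p) = 0 := by
      push_cast
      rw [ha, ZMod.natCast_val, ZMod.cast_id, inv_mul_cancel₀ hιz, sub_self]
    have hdvd : (p : ℤ) ∣ (a : ℤ) * ι - 1 := (ZMod.intCast_zmod_eq_zero_iff_dvd _ p).1 hcast
    obtain ⟨k, hk⟩ := hdvd
    obtain ⟨s, hs⟩ := hvsurj (-k)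
    refine ⟨z ^ a * algebraMap K L s, ?_, ?_⟩
    · exact mul_mem (pow_mem (IntermediateField.mem_adjoin_simple_self K z) a)
        ((IntermediateField.adjoin K {z}).algebraMap_mem s)
    · rw [hwmul, waux_pow w hw0 hwmul z _ hwz a, hwv, hs, ← WithTop.coe_add]
      congr 1
      have hkQ : (a : ℚ) * (ι : ℚ) - 1 = (p : ℚ) * (k : ℚ) := by exact_mod_cast hk
      field_simp
      push_cast
      linarith
  refine ⟨hfinrank, hpart2, ?_⟩
  intro π hπmem hπval
  have hπ0 : π ≠ 0 := by
    intro h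
    rw [h, waux_zero w hw0] at hπval
    exact WithTop.top_ne_coe hπval
  haveI hfd : FiniteDimensional K (IntermediateField.adjoin K {z}) :=
    IntermediateField.adjoin.finiteDimensional hintz
  have hintπ : IsIntegral K π := by
    have h1 : IsIntegral K (⟨π, hπmem⟩ : IntermediateField.adjoin K {z}) :=
      IsIntegral.of_finite K _
    simpa using h1.map (IntermediateField.adjoin K {z}).val
  -- representation of π as a polynomial of degree < p in z
  obtain ⟨h₀, hh₀⟩ : ∃ h₀ : Polynomial K, Polynomial.aeval z h₀ = π := by
    have hmem : π ∈ (IntermediateField.adjoin K {z}).toSubalgebra := hπmem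
    rw [IntermediateField.adjoin_simple_toSubalgebra_of_isAlgebraic hintz.isAlgebraic,
      Algebra.adjoin_singleton_eq_range_aeval] at hmem
    obtain ⟨h₀, hh₀⟩ := hmem
    exact ⟨h₀, hh₀⟩
  set rp : Polynomial K := h₀ %ₘ (minpoly K z) with hrpdef
  have hrpz : Polynomial.aeval z rp = π := by
    rw [hrpdef, Polynomial.aeval_modByMonic_eq_self_of_root
      (minpoly.aeval K z), hh₀]
  have hrpne : rp ≠ 0 := fun h => hπ0 (by rw [← hrpz, h, map_zero])
  have hrpdeg : rp.natDegree < p := by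
    have h1 : rp.degree < (minpoly K z).degree :=
      Polynomial.degree_modByMonic_lt h₀ (minpoly.monic hintz)
    rw [Polynomial.degree_eq_natDegree (minpoly.ne_zero hintz), hdegz,
      Polynomial.degree_eq_natDegree hrpne] at h1
    exact_mod_cast h1
  set a : ℕ → K := fun j => rp.coeff j with ha
  have hπsum : π = ∑ j ∈ Finset.range p, algebraMap K L (a j) * z ^ j := by
    rw [← hrpz, Polynomial.aeval_eq_sum_range' hrpdeg]
    exact Finset.sum_congr rfl fun j _ => by rw [Algebra.smul_def]
  have hane : ∃ j, j < p ∧ a j ≠ 0 :=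
    ⟨rp.natDegree, hrpdeg, Polynomial.leadingCoeff_ne_zero.2 hrpne⟩
  obtain ⟨j₀, hj₀p, hj₀ne, hj₀sum, hj₀min⟩ :=
    waux_combo w hw0 hwmul hwadd v hvint hwv hp hwz hιp a hane
  obtain ⟨n₀, hn₀, hn₀val⟩ := waux_term w hw0 hwmul v hvint hwv hwz (a j₀) j₀ hj₀ne
  have hj₀q : (n₀ : ℚ) + (j₀ : ℚ) * ((ι : ℚ) / (p : ℚ)) = 1 / (p : ℚ) := by
    have := hj₀sum.symm.trans (hπsum ▸ hπval)
    rw [hn₀val] at this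
    exact WithTop.coe_injective this
  have hj₀Z : n₀ * (p : ℤ) + (j₀ : ℤ) * ι = 1 := by
    have hQ : (n₀ : ℚ) * (p : ℚ) + (j₀ : ℚ) * (ι : ℚ) = 1 := by
      field_simp at hj₀q
      linarith
    exact_mod_cast hQ
  have hj₀1 : 1 ≤ j₀ := by
    rcases Nat.eq_zero_or_pos j₀ with h0 | h1
    · exfalso
      rw [h0] at hj₀Z
      simp at hj₀Z
      have : (p : ℤ) ∣ 1 := ⟨n₀, by linarith⟩
      have := Int.le_of_dvd one_pos this
      omega
    · exact h1
  -- degree of the minimal polynomial of π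
  have hdegπ : (minpoly K π).natDegree = p := by
    refine le_antisymm ?_ (hdeg_ge π 1 (by rw [hπval]; norm_num)
      (fun hd => by have := Int.le_of_dvd one_pos hd; omega) hintπ)
    have h1 : (minpoly K (⟨π, hπmem⟩ : IntermediateField.adjoin K {z})).natDegree
        ≤ Module.finrank K (IntermediateField.adjoin K {z}) := minpoly.natDegree_le _
    have h2 : minpoly K π = minpoly K (⟨π, hπmem⟩ : IntermediateField.adjoin K {z}) := by
      have h4 := minpoly.algebraMap_eq (A := K) (B := IntermediateField.adjoin K {z}) (B' := L)
        (algebraMap (IntermediateField.adjoin K {z}) L).injective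
        (⟨π, hπmem⟩ : IntermediateField.adjoin K {z})
      exact h4
    rw [h2, hfinrank] at *
    exact le_trans h1 (le_of_eq hfinrank)
  -- K(π) = K(z)
  have hEπ : IntermediateField.adjoin K {π} = IntermediateField.adjoin K {z} := by
    refine IntermediateField.eq_of_le_of_finrank_eq
      (IntermediateField.adjoin_le_iff.2 (Set.singleton_subset_iff.2 hπmem)) ?_
    rw [IntermediateField.adjoin.finrank hintπ, hdegπ, hfinrank]
  have hzπ : z ∈ IntermediateField.adjoin K {π} := by
    rw [hEπ]
    exact IntermediateField.mem_adjoin_simple_self K z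
  haveI hfdπ : FiniteDimensional K (IntermediateField.adjoin K {π}) :=
    IntermediateField.adjoin.finiteDimensional hintπ
  set z' : IntermediateField.adjoin K {π} := ⟨z, hzπ⟩ with hz'
  set π' : IntermediateField.adjoin K {π} := IntermediateField.AdjoinSimple.gen K π with hπ'
  -- separability
  have hsepz : (minpoly K z).Separable := by
    have hder : Polynomial.derivative fhat = Polynomial.C (A / u) := by
      rw [hfhat]
      simp [Polynomial.derivative_X_pow, CharP.cast_eq_zero K p]
    have hsepf : fhat.Separable := by
      rw [Polynomial.Separable, hder]
      exact ⟨0, Polynomial.C (A / u)⁻¹, by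
        rw [zero_mul, zero_add, ← Polynomial.C_mul, inv_mul_cancel₀ (div_ne_zero hA0 hu0),
          Polynomial.C_1]⟩
    exact hsepf.of_dvd (minpoly.dvd K z hfz)
  haveI hsepE : Algebra.IsSeparable K (IntermediateField.adjoin K {z}) :=
    (IntermediateField.isSeparable_adjoin_simple_iff_isSeparable K L).2 hsepz
  haveI hsepE' : Algebra.IsSeparable K (IntermediateField.adjoin K {π}) := by
    rw [hEπ]
    exact hsepE
  haveI hacl : IsAlgClosed L := IsAlgClosure.isAlgClosed K
  -- the equation satisfied by z inside K(π)
  have heqE' : (algebraMap K (IntermediateField.adjoin K {π}) u) * z' ^ p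
      + (algebraMap K (IntermediateField.adjoin K {π}) A) * z'
      - algebraMap K (IntermediateField.adjoin K {π}) c = 0 := by
    apply (algebraMap (IntermediateField.adjoin K {π}) L).injective
    rw [map_zero, map_sub, map_add, map_mul, map_mul, map_pow]
    rw [← IsScalarTower.algebraMap_apply, ← IsScalarTower.algebraMap_apply,
      ← IsScalarTower.algebraMap_apply]
    exact hz
  -- conjugates of z
  have hroot : ∀ σ : (IntermediateField.adjoin K {π}) →ₐ[K] L,
      algebraMap K L u * (σ z') ^ p + algebraMap K L A * (σ z') - algebraMap K L c = 0 := by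
    intro σ
    have h1 := congrArg σ heqE'
    rw [map_zero, map_sub, map_add, map_mul, map_mul, map_pow, σ.commutes, σ.commutes,
      σ.commutes] at h1
    exact h1
  have hδ : ∀ σ : (IntermediateField.adjoin K {π}) →ₐ[K] L,
      σ z' = z ∨ w (σ z' - z) = ((1 : ℚ) : WithTop ℚ) := by
    intro σ
    set δ := σ z' - z with hδdef
    have hfrob : δ ^ p = (σ z') ^ p - z ^ p := sub_pow_char (σ z') z
    have hsub : algebraMap K L u * δ ^ p + algebraMap K L A * δ = 0 := by
      rw [hfrob, hδdef]
      linear_combination (hroot σ) - hz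
    rcases eq_or_ne δ 0 with h0 | hne
    · left
      rw [hδdef] at h0
      rwa [sub_eq_zero] at h0
    · right
      have hpow : δ ^ (p - 1) * δ = δ ^ p := by
        rw [← pow_succ]
        congr 1
        omega
      have hfac : δ * (algebraMap K L u * δ ^ (p - 1) + algebraMap K L A) = 0 := by
        linear_combination hsub + algebraMap K L u * hpow
      rcases mul_eq_zero.mp hfac with h | h
      · exact absurd h hne
      · have hAeq : algebraMap K L u * δ ^ (p - 1) = - algebraMap K L A :=
          eq_neg_of_add_eq_zero_left h
        have hδtop : w δ ≠ ⊤ := fun ht => hne ((hw0 δ).1 ht)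
        obtain ⟨q, hq⟩ : ∃ q : ℚ, w δ = (q : WithTop ℚ) := by
          cases hwδ' : w δ with
          | top => exact absurd hwδ' hδtop
          | coe q => exact ⟨q, rfl⟩
        have hL : w (algebraMap K L u * δ ^ (p - 1)) = ((((p - 1 : ℕ) : ℚ) * q : ℚ) : WithTop ℚ) := by
          rw [hwmul, hwv, hu, waux_pow w hw0 hwmul δ q hq (p - 1), ← WithTop.coe_add]
          norm_num
        have hR : w (- algebraMap K L A) = ((((p : ℚ) - 1) : ℚ) : WithTop ℚ) := by
          rw [waux_neg w hw0 hwmul, hwv, hA]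
        rw [hAeq, hR] at hL
        have hq1 : ((p : ℚ) - 1) = ((p - 1 : ℕ) : ℚ) * q := WithTop.coe_injective hL
        have hcast : ((p - 1 : ℕ) : ℚ) = (p : ℚ) - 1 := by
          have : 1 ≤ p := hp.pos
          push_cast [this]
          ring
        rw [hcast] at hq1
        have hqq : q = 1 := by
          have hne1 : (p : ℚ) - 1 ≠ 0 := by
            have : (2 : ℚ) ≤ (p : ℚ) := by exact_mod_cast hp2
            linarith
          have := mul_left_cancel₀ hne1 (by rw [mul_one]; exact hq1 :
            ((p : ℚ) - 1) * 1 = ((p : ℚ) - 1) * q)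
          linarith
        rw [hq, hqq]
  -- representation of the generator of K(π) via z'
  have hvalz' : (IntermediateField.adjoin K {π}).val z' = z := rfl
  have hvalπ' : (IntermediateField.adjoin K {π}).val π' = π :=
    IntermediateField.AdjoinSimple.algebraMap_gen K π
  have hcoeaeval : ∀ (x : IntermediateField.adjoin K {π}) (q : Polynomial K),
      ((Polynomial.aeval x q : IntermediateField.adjoin K {π}) : L)
        = Polynomial.aeval ((x : L)) q :=
    fun x q => (Polynomial.aeval_algHom_apply (IntermediateField.adjoin K {π}).val x q).symm
  have hπ'rep : π' = Polynomial.aeval z' rp := by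
    apply Subtype.coe_injective
    show ((π' : L)) = ((Polynomial.aeval z' rp : IntermediateField.adjoin K {π}) : L)
    rw [hcoeaeval z' rp]
    show π = _
    rw [show ((z' : L)) = z from rfl, hrpz]
  have hσπ : ∀ σ : (IntermediateField.adjoin K {π}) →ₐ[K] L,
      σ π' = ∑ j ∈ Finset.range p, algebraMap K L (a j) * (σ z') ^ j := by
    intro σ
    rw [hπ'rep, ← Polynomial.aeval_algHom_apply σ z' rp, Polynomial.aeval_eq_sum_range' hrpdeg]
    exact Finset.sum_congr rfl fun j _ => by rw [Algebra.smul_def]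
  -- value of π - σ π' for nontrivial σ
  have hconj : ∀ σ : (IntermediateField.adjoin K {π}) →ₐ[K] L, σ z' ≠ z →
      w (π - σ π') = ((((p : ℚ) - (ι : ℚ) + 1) / (p : ℚ) : ℚ) : WithTop ℚ) := by
    intro σ hσz
    have hwδ : w (σ z' - z) = ((1 : ℚ) : WithTop ℚ) := (hδ σ).resolve_left hσz
    have h1 := hσπ σ
    set y := σ π' with hy
    set Zσ := σ z' with hZσ
    set δ : L := Zσ - z with hδdef
    set F : ℕ → L := fun j => algebraMap K L (a j) * (z ^ j - (z + δ) ^ j) with hF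
    have hZz : Zσ = z + δ := by rw [hδdef]; ring
    have hdiff : π - y = ∑ j ∈ Finset.range p, F j := by
      rw [h1, hπsum, hZz, ← Finset.sum_sub_distrib]
      exact Finset.sum_congr rfl fun j _ => by rw [hF]; ring
    have hFval : ∀ j, 1 ≤ j → j < p → a j ≠ 0 → ∀ n : ℤ, v (a j) = ((n : ℚ) : WithTop ℚ) →
        w (F j) = ((((n : ℚ) + 1 + ((j : ℚ) - 1) * ((ι : ℚ) / (p : ℚ))) : ℚ) : WithTop ℚ) := by
      intro j hj1 hjp haj n hn
      have hneg : z ^ j - (z + δ) ^ j = -((z + δ) ^ j - z ^ j) := by ring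
      rw [hF]
      simp only
      rw [hwmul, hwv, hn, hneg, waux_neg w hw0 hwmul,
        waux_diff_pow w hw0 hwmul hwadd p ι hι1 hι2 z δ hwz hwδ j hj1 hjp, ← WithTop.coe_add]
      congr 1
      ring
    have hj₀mem : j₀ ∈ Finset.range p := Finset.mem_range.2 hj₀p
    have hFj₀ : w (F j₀)
        = ((((n₀ : ℚ) + 1 + ((j₀ : ℚ) - 1) * ((ι : ℚ) / (p : ℚ))) : ℚ) : WithTop ℚ) :=
      hFval j₀ hj₀1 hj₀p hj₀ne n₀ hn₀
    have harith : (n₀ : ℚ) + 1 + ((j₀ : ℚ) - 1) * ((ι : ℚ) / (p : ℚ))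
        = ((p : ℚ) - (ι : ℚ) + 1) / (p : ℚ) := by
      field_simp
      field_simp at hj₀q
      nlinarith [hj₀q]
    rw [hdiff, waux_sum_eq w hw0 hwmul hwadd _ F j₀ hj₀mem ?_, hFj₀, harith]
    intro i hi hinej₀
    have hFj₀top : w (F j₀) < ⊤ := by rw [hFj₀]; exact WithTop.coe_lt_top _
    rcases Nat.eq_zero_or_pos i with h0 | h1
    · have hFi : F i = 0 := by rw [hF, h0]; simp
      rw [hFi, waux_zero w hw0]
      exact hFj₀top
    · by_cases hai : a i = 0
      · have hFi : F i = 0 := by rw [hF]; simp only; rw [hai, map_zero, zero_mul]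
        rw [hFi, waux_zero w hw0]
        exact hFj₀top
      · obtain ⟨m, hm, hmval⟩ := waux_term w hw0 hwmul v hvint hwv hwz (a i) i hai
        have hlt := hj₀min i (Finset.mem_range.1 hi) hinej₀ hai
        rw [hn₀val, hmval] at hlt
        have hltQ : (n₀ : ℚ) + (j₀ : ℚ) * ((ι : ℚ) / (p : ℚ))
            < (m : ℚ) + (i : ℚ) * ((ι : ℚ) / (p : ℚ)) := WithTop.coe_lt_coe.1 hlt
        rw [hFj₀, hFval i h1 (Finset.mem_range.1 hi) hai m hm]
        exact WithTop.coe_lt_coe.2 (by linarith)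
  -- the roots of the minimal polynomial of π
  have hgmonic : ((minpoly K π).map (algebraMap K L)).Monic := (minpoly.monic hintπ).map _
  have hgnd : ((minpoly K π).map (algebraMap K L)).natDegree = p := by
    rw [Polynomial.natDegree_map, hdegπ]
  have hgsplits : ((minpoly K π).map (algebraMap K L)).Splits :=
    IsAlgClosed.splits _
  have hgroots_card : ((minpoly K π).map (algebraMap K L)).roots.card = p := by
    rw [← hgnd]
    exact Polynomial.splits_iff_card_roots.1 hgsplits
  have hπ'g : Polynomial.aeval π' (minpoly K π) = 0 := by
    apply Subtype.coe_injective
    show ((Polynomial.aeval π' (minpoly K π) : IntermediateField.adjoin K {π}) : L)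
      = ((0 : IntermediateField.adjoin K {π}) : L)
    rw [hcoeaeval π' (minpoly K π)]
    show Polynomial.aeval ((π' : L)) (minpoly K π) = ((0 : IntermediateField.adjoin K {π}) : L)
    rw [show ((π' : L)) = π from rfl, minpoly.aeval K π]
    rfl
  have hrootmem : ∀ σ : (IntermediateField.adjoin K {π}) →ₐ[K] L,
      σ π' ∈ ((minpoly K π).map (algebraMap K L)).roots := by
    intro σ
    rw [Polynomial.mem_roots hgmonic.ne_zero]
    have : Polynomial.aeval (σ π') (minpoly K π) = 0 := by
      rw [Polynomial.aeval_algHom_apply σ π' _, hπ'g, map_zero]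
    rwa [Polynomial.IsRoot.def, Polynomial.eval_map, ← Polynomial.aeval_def]
  set pb := IntermediateField.adjoin.powerBasis hintπ with hpb
  have hinj : Function.Injective
      (fun σ : (IntermediateField.adjoin K {π}) →ₐ[K] L => σ π') := by
    intro σ τ h
    exact PowerBasis.algHom_ext pb h
  set T : Finset L :=
    Finset.image (fun σ : (IntermediateField.adjoin K {π}) →ₐ[K] L => σ π') Finset.univ with hT
  have hTcard : T.card = p := by
    rw [hT, Finset.card_image_of_injective _ hinj, Finset.card_univ, AlgHom.card,
      IntermediateField.adjoin.finrank hintπ, hdegπ]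
  have hTle : T.val ≤ ((minpoly K π).map (algebraMap K L)).roots := by
    rw [Multiset.le_iff_count]
    intro r
    by_cases hr : r ∈ T
    · rw [Multiset.count_eq_one_of_mem T.nodup hr]
      obtain ⟨σ, -, rfl⟩ := Finset.mem_image.1 hr
      exact Multiset.one_le_count_iff_mem.2 (hrootmem σ)
    · rw [Multiset.count_eq_zero_of_notMem hr]
      exact Nat.zero_le _
  have hTeq : ((minpoly K π).map (algebraMap K L)).roots = T.val :=
    (Multiset.eq_of_le_of_card_le hTle (by rw [hgroots_card, ← hTcard]; rfl)).symm
  have hπT : π ∈ T := by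
    refine Finset.mem_image.2 ⟨(IntermediateField.adjoin K {π}).val, Finset.mem_univ _, hvalπ'⟩
  have hπroot : π ∈ ((minpoly K π).map (algebraMap K L)).roots := by
    rw [hTeq]
    exact hπT
  -- evaluation of the derivative
  have hderiv_eq : Polynomial.aeval π (Polynomial.derivative (minpoly K π)) =
      ((((minpoly K π).map (algebraMap K L)).roots.erase π).map (fun r => π - r)).prod := by
    rw [Polynomial.aeval_def, Polynomial.eval₂_eq_eval_map, ← Polynomial.derivative_map]
    conv_lhs => rw [hgsplits.eq_prod_roots_of_monic hgmonic]
    exact Polynomial.eval_multiset_prod_X_sub_C_derivative hπroot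
  have hvals : ∀ x ∈ ((((minpoly K π).map (algebraMap K L)).roots.erase π).map
      (fun r => π - r)),
      w x = ((((p : ℚ) - (ι : ℚ) + 1) / (p : ℚ) : ℚ) : WithTop ℚ) := by
    intro x hx
    obtain ⟨r, hr, rfl⟩ := Multiset.mem_map.1 hx
    have hnodup : (((minpoly K π).map (algebraMap K L)).roots).Nodup := by
      rw [hTeq]
      exact T.nodup
    have hrr := (hnodup.mem_erase_iff).1 hr
    have hrT : r ∈ T := by
      rw [hTeq] at hrr
      exact hrr.2
    obtain ⟨σ, -, rfl⟩ := Finset.mem_image.1 hrT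
    have hσzne : σ z' ≠ z := by
      intro hzz
      apply hrr.1
      rw [hσπ σ, hzz, ← hπsum]
    exact hconj σ hσzne
  have hcard_erase : ((((minpoly K π).map (algebraMap K L)).roots.erase π)).card = p - 1 := by
    rw [Multiset.card_erase_of_mem hπroot, hgroots_card]
    rfl
  rw [hderiv_eq, waux_prod_multiset w hw0 hwmul _ _ hvals, Multiset.card_map, hcard_erase]
  congr 1
  have hpc : ((p - 1 : ℕ) : ℚ) = (p : ℚ) - 1 := by
    have h1 : 1 ≤ p := hp.pos
    push_cast [h1]
    ring
  rw [hpc]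
  field_simp
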